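/- (Coupling step 2.) Under the stated one-inner-step setup, for every u ∈ ℝ^l: α_s ⟨∇φ(v_{k+1}), v_{k+1} − u⟩ ≤ α_s φ(v_{k+1}) + (α_s (1 − τ_{1,s} − τ₂)/τ_{1,s}) φ(y_k) + (α_s/τ_{1,s}) · ( τ₂ φ(ṽ^s) − E[φ(y_{k+1})] ) + V_{z_k}(u) − E[V_{z_{k+1}}(u)]. -/

import Mathlib

open scoped RealInnerProductSpace BigOperators



section
variable {dl : ℕ}

lemma aux_sub_sum {ι : Type*} (q : EuclideanSpace ℝ (Fin dl) → ℝ) (hq0 : q 0 = 0)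
    (hqa : ∀ x y, q (x + y) ≤ q x + q y) (s : Finset ι) (f : ι → EuclideanSpace ℝ (Fin dl)) :
    q (∑ i ∈ s, f i) ≤ ∑ i ∈ s, q (f i) := by
  classical
  induction s using Finset.induction with
  | empty => simp [hq0]
  | insert a s hx ih =>
    rw [Finset.sum_insert hx, Finset.sum_insert hx]
    exact le_trans (hqa _ _) (by linarith)

variable (H : EuclideanSpace ℝ (Fin dl) → ℝ)

lemma aux_H_zero (hH_def : ∀ x, H x = 0 ↔ x = 0) : H 0 = 0 := (hH_def 0).mpr rfl

lemma aux_H_neg (hH_smul : ∀ (c : ℝ) x, H (c • x) = |c| * H x) (x : EuclideanSpace ℝ (Fin dl)) :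
    H (-x) = H x := by
  have := hH_smul (-1) x; simpa using this

lemma aux_H_nonneg (hH_def : ∀ x, H x = 0 ↔ x = 0)
    (hH_smul : ∀ (c : ℝ) x, H (c • x) = |c| * H x)
    (hH_tri : ∀ x y, H (x + y) ≤ H x + H y) (x : EuclideanSpace ℝ (Fin dl)) : 0 ≤ H x := by
  have h0 : H 0 = 0 := aux_H_zero H hH_def
  have h1 := hH_tri x (-x)
  rw [add_neg_cancel, h0, aux_H_neg H hH_smul] at h1
  linarith

lemma aux_norm_le (hH_def : ∀ x, H x = 0 ↔ x = 0)
    (hH_smul : ∀ (c : ℝ) x, H (c • x) = |c| * H x)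
    (hH_tri : ∀ x y, H (x + y) ≤ H x + H y) :
    ∃ C : ℝ, 0 < C ∧ ∀ v, ‖v‖ ≤ C * H v := by
  have h0 : H 0 = 0 := aux_H_zero H hH_def
  rcases Nat.eq_zero_or_pos dl with hdl | hdl
  · refine ⟨1, one_pos, fun v => ?_⟩
    subst hdl
    have hv : v = 0 := Subsingleton.elim v 0
    simp [hv, h0]
  · -- continuity of H
    have hub : ∀ z : EuclideanSpace ℝ (Fin dl),
        H z ≤ (∑ i, H (EuclideanSpace.single i 1)) * ‖z‖ := by
      intro z
      have hrepr : z = ∑ i, z i • EuclideanSpace.single i (1 : ℝ) := by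
        ext j
        rw [WithLp.ofLp_sum, Finset.sum_apply]
        simp [PiLp.smul_apply, EuclideanSpace.single_apply]
      calc H z = H (∑ i, z i • EuclideanSpace.single i (1 : ℝ)) := by rw [← hrepr]
        _ ≤ ∑ i, H (z i • EuclideanSpace.single i (1 : ℝ)) :=
            aux_sub_sum H h0 hH_tri _ _
        _ ≤ ∑ i, H (EuclideanSpace.single i 1) * ‖z‖ := by
            apply Finset.sum_le_sum
            intro i _
            rw [hH_smul]
            have h1 : |z i| ≤ ‖z‖ := by
              have heq := EuclideanSpace.norm_eq z
              have h2 : ‖z i‖ ^ 2 ≤ ∑ j, ‖z j‖ ^ 2 := by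
                apply Finset.single_le_sum (f := fun j => ‖z j‖ ^ 2)
                · intro j _; positivity
                · exact Finset.mem_univ i
              rw [Real.norm_eq_abs] at h2
              nlinarith [abs_nonneg (z i), norm_nonneg z, Real.sq_sqrt (by positivity : (0:ℝ) ≤ ∑ j, ‖z j‖ ^ 2), Real.sqrt_nonneg (∑ j, ‖z j‖ ^ 2)]
            have hH : 0 ≤ H (EuclideanSpace.single i 1) :=
              aux_H_nonneg H hH_def hH_smul hH_tri _
            calc |z i| * H (EuclideanSpace.single i 1)
                ≤ ‖z‖ * H (EuclideanSpace.single i 1) := by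
                  apply mul_le_mul_of_nonneg_right h1 hH
              _ = H (EuclideanSpace.single i 1) * ‖z‖ := mul_comm _ _
        _ = (∑ i, H (EuclideanSpace.single i 1)) * ‖z‖ := by rw [Finset.sum_mul]
    set K := ∑ i, H (EuclideanSpace.single i (1:ℝ)) with hK
    have hKnn : 0 ≤ K := Finset.sum_nonneg fun i _ => aux_H_nonneg H hH_def hH_smul hH_tri _
    have hcont : Continuous H := by
      have hlip : LipschitzWith (Real.toNNReal K) H := by
        apply LipschitzWith.of_dist_le_mul
        intro x y
        rw [Real.dist_eq, dist_eq_norm]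
        have habs : ∀ a b : EuclideanSpace ℝ (Fin dl), H a - H b ≤ H (a - b) := by
          intro a b
          have h3 := hH_tri b (a - b)
          simp at h3
          linarith
        rw [abs_sub_le_iff]
        constructor
        · calc H x - H y ≤ H (x - y) := habs x y
            _ ≤ K * ‖x - y‖ := hub _
            _ = (Real.toNNReal K) * ‖x - y‖ := by
                rw [Real.coe_toNNReal _ hKnn]
        · calc H y - H x ≤ H (y - x) := habs y x
            _ ≤ K * ‖y - x‖ := hub _
            _ = (Real.toNNReal K) * ‖x - y‖ := by
                rw [Real.coe_toNNReal _ hKnn, norm_sub_rev]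
      exact hlip.continuous
    -- minimum on the sphere
    haveI : NeZero dl := ⟨hdl.ne'⟩
    have hsne : (Metric.sphere (0 : EuclideanSpace ℝ (Fin dl)) 1).Nonempty := by
      refine ⟨EuclideanSpace.single ⟨0, hdl⟩ (1:ℝ), ?_⟩
      simp [EuclideanSpace.norm_single]
    obtain ⟨c, hcS, hcmin⟩ := (isCompact_sphere (0 : EuclideanSpace ℝ (Fin dl)) 1).exists_isMinOn
      hsne hcont.continuousOn
    have hcne : c ≠ 0 := by
      intro h
      rw [Metric.mem_sphere, dist_zero_right, h] at hcS
      simp at hcS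
    have hε : 0 < H c := by
      rcases lt_or_eq_of_le (aux_H_nonneg H hH_def hH_smul hH_tri c) with h | h
      · exact h
      · exact absurd ((hH_def c).mp h.symm) hcne
    refine ⟨(H c)⁻¹, inv_pos.mpr hε, fun v => ?_⟩
    rcases eq_or_ne v 0 with rfl | hv
    · simp [h0]
    · have hvn : 0 < ‖v‖ := norm_pos_iff.mpr hv
      have hv' : (‖v‖⁻¹ • v) ∈ Metric.sphere (0 : EuclideanSpace ℝ (Fin dl)) 1 := by
        simp [norm_smul, abs_of_nonneg (le_of_lt (inv_pos.mpr hvn)), inv_mul_cancel₀ (ne_of_gt hvn)]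
      have h2 : H c ≤ H (‖v‖⁻¹ • v) := hcmin hv'
      rw [hH_smul, abs_of_nonneg (le_of_lt (inv_pos.mpr hvn))] at h2
      have h3 : ‖v‖ * (‖v‖⁻¹ * H v) = H v := by field_simp
      have h4 : ‖v‖ * H c ≤ H v := by
        calc ‖v‖ * H c ≤ ‖v‖ * (‖v‖⁻¹ * H v) := by
              exact mul_le_mul_of_nonneg_left h2 hvn.le
          _ = H v := h3
      rw [inv_mul_eq_div, le_div_iff₀ hε]
      linarith
end
set_option linter.unusedSectionVars false

open scoped RealInnerProductSpace BigOperators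

section
variable {dl : ℕ}
variable (H Hd : EuclideanSpace ℝ (Fin dl) → ℝ)
  (hHd : ∀ u, Hd u = sSup ((fun v => ⟪u, v⟫) '' {v | H v ≤ 1}))
  (C : ℝ) (hC : ∀ v, ‖v‖ ≤ C * H v) (hC0 : 0 < C) (hH0 : H 0 = 0)
  (hH_smul : ∀ (c : ℝ) x, H (c • x) = |c| * H x)
  (hHnn : ∀ x, 0 ≤ H x)

include hHd hC hC0 hH0

lemma aux_Hd_ne (u : EuclideanSpace ℝ (Fin dl)) :
    ((fun v => ⟪u, v⟫) '' {v | H v ≤ 1}).Nonempty :=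
  ⟨⟪u, (0 : EuclideanSpace ℝ (Fin dl))⟫, 0, by simp [hH0], rfl⟩

lemma aux_Hd_bdd (u : EuclideanSpace ℝ (Fin dl)) :
    BddAbove ((fun v => ⟪u, v⟫) '' {v | H v ≤ 1}) := by
  refine ⟨‖u‖ * C, fun y hy => ?_⟩
  obtain ⟨v, hv, rfl⟩ := hy
  calc ⟪u, v⟫ ≤ ‖u‖ * ‖v‖ := real_inner_le_norm u v
    _ ≤ ‖u‖ * (C * H v) := mul_le_mul_of_nonneg_left (hC v) (norm_nonneg u)
    _ ≤ ‖u‖ * (C * 1) := by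
        have : C * H v ≤ C * 1 := mul_le_mul_of_nonneg_left hv hC0.le
        exact mul_le_mul_of_nonneg_left this (norm_nonneg u)
    _ = ‖u‖ * C := by ring

lemma aux_le_Hd {u v : EuclideanSpace ℝ (Fin dl)} (hv : H v ≤ 1) : ⟪u, v⟫ ≤ Hd u := by
  rw [hHd]
  exact le_csSup (aux_Hd_bdd H Hd hHd C hC hC0 hH0 u) ⟨v, hv, rfl⟩

lemma aux_Hd_nonneg (u : EuclideanSpace ℝ (Fin dl)) : 0 ≤ Hd u := by
  have := aux_le_Hd H Hd hHd C hC hC0 hH0 (u := u) (v := 0) (by simp [hH0])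
  simpa using this

lemma aux_Hd_le {u : EuclideanSpace ℝ (Fin dl)} {b : ℝ}
    (hb : ∀ v, H v ≤ 1 → ⟪u, v⟫ ≤ b) : Hd u ≤ b := by
  rw [hHd]
  apply csSup_le (aux_Hd_ne H Hd hHd C hC hC0 hH0 u)
  rintro y ⟨v, hv, rfl⟩
  exact hb v hv

include hHnn hH_smul in
lemma aux_inner_le_Hd_H (u v : EuclideanSpace ℝ (Fin dl)) : ⟪u, v⟫ ≤ Hd u * H v := by
  rcases eq_or_lt_of_le (hHnn v) with h | h
  · have key : ∀ t : ℝ, 0 < t → t * ⟪u, v⟫ ≤ Hd u := by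
      intro t ht
      have : H (t • v) ≤ 1 := by rw [hH_smul, ← h]; simp
      have h2 := aux_le_Hd H Hd hHd C hC hC0 hH0 (u := u) this
      rwa [real_inner_smul_right] at h2
    by_contra hcon
    push_neg at hcon
    rw [← h, mul_zero] at hcon
    have hu := aux_Hd_nonneg H Hd hHd C hC hC0 hH0 u
    have := key ((Hd u + 1) / ⟪u, v⟫) (by positivity)
    rw [div_mul_cancel₀ _ (ne_of_gt hcon)] at this
    linarith
  · have hv1 : H ((H v)⁻¹ • v) ≤ 1 := by
      rw [hH_smul, abs_of_nonneg (le_of_lt (inv_pos.mpr h)), inv_mul_cancel₀ (ne_of_gt h)]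
    have h2 := aux_le_Hd H Hd hHd C hC hC0 hH0 (u := u) hv1
    rw [real_inner_smul_right] at h2
    have h3 := mul_le_mul_of_nonneg_left h2 h.le
    rw [← mul_assoc, mul_inv_cancel₀ (ne_of_gt h), one_mul] at h3
    linarith [h3]

lemma aux_Hd_add (a b : EuclideanSpace ℝ (Fin dl)) : Hd (a + b) ≤ Hd a + Hd b := by
  apply aux_Hd_le H Hd hHd C hC hC0 hH0
  intro v hv
  rw [inner_add_left]
  exact add_le_add (aux_le_Hd H Hd hHd C hC hC0 hH0 hv) (aux_le_Hd H Hd hHd C hC hC0 hH0 hv)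

lemma aux_Hd_smul_le {c : ℝ} (hc : 0 ≤ c) (a : EuclideanSpace ℝ (Fin dl)) :
    Hd (c • a) ≤ c * Hd a := by
  apply aux_Hd_le H Hd hHd C hC hC0 hH0
  intro v hv
  rw [real_inner_smul_left]
  exact mul_le_mul_of_nonneg_left (aux_le_Hd H Hd hHd C hC hC0 hH0 hv) hc

include hH_smul in
lemma aux_Hd_neg (a : EuclideanSpace ℝ (Fin dl)) : Hd (-a) = Hd a := by
  have key : ∀ b : EuclideanSpace ℝ (Fin dl), Hd (-b) ≤ Hd b := by
    intro b
    apply aux_Hd_le H Hd hHd C hC hC0 hH0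
    intro v hv
    have hv' : H (-v) ≤ 1 := by
      have := hH_smul (-1) v
      simp at this
      rwa [this]
    have := aux_le_Hd H Hd hHd C hC hC0 hH0 (u := b) hv'
    rw [inner_neg_left]
    rw [inner_neg_right] at this
    linarith
  have h1 := key a
  have h2 := key (-a)
  rw [neg_neg] at h2
  linarith

lemma aux_Hd_zero : Hd (0 : EuclideanSpace ℝ (Fin dl)) = 0 := by
  have h1 := aux_Hd_nonneg H Hd hHd C hC hC0 hH0 (0 : EuclideanSpace ℝ (Fin dl))
  have h2 : Hd (0 : EuclideanSpace ℝ (Fin dl)) ≤ 0 :=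
    aux_Hd_le H Hd hHd C hC hC0 hH0 (fun v _ => by simp)
  linarith

lemma aux_Hd_near_sup (u : EuclideanSpace ℝ (Fin dl)) {ε : ℝ} (hε : 0 < ε) :
    ∃ v, H v ≤ 1 ∧ Hd u - ε < ⟪u, v⟫ := by
  have h1 : Hd u - ε < sSup ((fun v => ⟪u, v⟫) '' {v | H v ≤ 1}) := by
    rw [← hHd]; linarith
  obtain ⟨y, hy, hlt⟩ := exists_lt_of_lt_csSup (aux_Hd_ne H Hd hHd C hC hC0 hH0 u) h1
  obtain ⟨v, hv, rfl⟩ := hy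
  exact ⟨v, hv, hlt⟩

end



section
variable {dl : ℕ}

lemma aux_line_deriv (f : EuclideanSpace ℝ (Fin dl) → ℝ)
    (gf : EuclideanSpace ℝ (Fin dl) → EuclideanSpace ℝ (Fin dl))
    (hf : ∀ x, HasGradientAt f (gf x) x) (x d : EuclideanSpace ℝ (Fin dl)) (t : ℝ) :
    HasDerivAt (fun t : ℝ => f (x + t • d)) ⟪gf (x + t • d), d⟫ t := by
  have h1 : HasDerivAt (fun t : ℝ => x + t • d) d t := by
    simpa using ((hasDerivAt_id t).smul_const d).const_add x
  have h2 := (hf (x + t • d)).hasFDerivAt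
  have h3 := h2.comp_hasDerivAt t h1
  simpa [InnerProductSpace.toDual_apply_apply, Function.comp_def] using h3

variable (H Hd : EuclideanSpace ℝ (Fin dl) → ℝ)
  (hH0 : H 0 = 0)
  (hH_smul : ∀ (c : ℝ) x, H (c • x) = |c| * H x)
  (hHnn : ∀ x, 0 ≤ H x)
  (hCS : ∀ u v, ⟪u, v⟫ ≤ Hd u * H v)
  (hHdnn : ∀ u, 0 ≤ Hd u)
  (hnear : ∀ (u : EuclideanSpace ℝ (Fin dl)) (ε : ℝ), 0 < ε → ∃ v, H v ≤ 1 ∧ Hd u - ε < ⟪u, v⟫)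

include hH0 hH_smul hHnn hCS hHdnn hnear

lemma aux_descent (f : EuclideanSpace ℝ (Fin dl) → ℝ)
    (gf : EuclideanSpace ℝ (Fin dl) → EuclideanSpace ℝ (Fin dl))
    (hf : ∀ x, HasGradientAt f (gf x) x) (L : ℝ) (hL : 0 ≤ L)
    (hsmooth : ∀ x y, Hd (gf x - gf y) ≤ L * H (x - y))
    (x d : EuclideanSpace ℝ (Fin dl)) :
    f (x + d) ≤ f x + ⟪gf x, d⟫ + L / 2 * H d ^ 2 := by
  set G : ℝ → ℝ := fun t => f (x + t • d) - t * ⟪gf x, d⟫ - L / 2 * H d ^ 2 * t ^ 2 with hGdef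
  have hG' : ∀ t : ℝ, HasDerivAt G (⟪gf (x + t • d), d⟫ - ⟪gf x, d⟫ - L * H d ^ 2 * t) t := by
    intro t
    have h1 := aux_line_deriv f gf hf x d t
    have h2 : HasDerivAt (fun t : ℝ => t * ⟪gf x, d⟫) ⟪gf x, d⟫ t := by
      simpa using (hasDerivAt_id t).mul_const (⟪gf x, d⟫ : ℝ)
    have h3 : HasDerivAt (fun t : ℝ => L / 2 * H d ^ 2 * t ^ 2) (L / 2 * H d ^ 2 * (2 * t)) t := by
      simpa using (hasDerivAt_pow 2 t).const_mul (L / 2 * H d ^ 2)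
    have h4 := (h1.sub h2).sub h3
    convert h4 using 1
    · rfl
    · rfl
    · rfl
    push_cast
    ring
  have hdiffG : Differentiable ℝ G := fun t => (hG' t).differentiableAt
  have hmono : AntitoneOn G (Set.Icc 0 1) := by
    apply antitoneOn_of_deriv_nonpos (convex_Icc 0 1) hdiffG.continuous.continuousOn
    · intro t _
      exact (hdiffG t).differentiableWithinAt
    · intro t ht
      rw [interior_Icc] at ht
      rw [(hG' t).deriv]
      have key : ⟪gf (x + t • d) - gf x, d⟫ ≤ L * H d ^ 2 * t := by
        calc ⟪gf (x + t • d) - gf x, d⟫ ≤ Hd (gf (x + t • d) - gf x) * H d := hCS _ _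
          _ ≤ (L * H ((x + t • d) - x)) * H d :=
              mul_le_mul_of_nonneg_right (hsmooth _ _) (hHnn d)
          _ = L * H d ^ 2 * t := by
              have heq : (x + t • d) - x = t • d := by abel
              rw [heq, hH_smul, abs_of_pos ht.1]
              ring
      rw [inner_sub_left] at key
      linarith
  have h10 := hmono (Set.left_mem_Icc.mpr zero_le_one) (Set.right_mem_Icc.mpr zero_le_one)
    zero_le_one
  simp only [hGdef, zero_smul, add_zero, one_smul, zero_mul, zero_pow, mul_zero, sub_zero,
    one_pow, mul_one, one_mul] at h10
  linarith

lemma aux_grad_convex (f : EuclideanSpace ℝ (Fin dl) → ℝ)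
    (gf : EuclideanSpace ℝ (Fin dl) → EuclideanSpace ℝ (Fin dl))
    (hconv : ConvexOn ℝ Set.univ f) (hf : ∀ x, HasGradientAt f (gf x) x)
    (x y : EuclideanSpace ℝ (Fin dl)) : f x + ⟪gf x, y - x⟫ ≤ f y := by
  set d := y - x with hd
  have h2 : HasDerivWithinAt (fun t : ℝ => f (x + t • d)) ⟪gf x, d⟫ (Set.Ioi 0) 0 := by
    have := (aux_line_deriv f gf hf x d 0).hasDerivWithinAt (s := Set.Ioi 0)
    simpa using this
  have h3 := hasDerivWithinAt_iff_tendsto_slope.mp h2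
  have hIoi : Set.Ioi (0:ℝ) \ {0} = Set.Ioi 0 := by
    apply Set.diff_singleton_eq_self
    simp
  rw [hIoi] at h3
  have h4 : ∀ᶠ t in nhdsWithin 0 (Set.Ioi 0),
      slope (fun t : ℝ => f (x + t • d)) 0 t ≤ f y - f x := by
    filter_upwards [Ioc_mem_nhdsGT_of_mem ⟨le_refl (0:ℝ), one_pos⟩] with t ht
    rw [slope_def_field]
    simp only [zero_smul, add_zero, sub_zero]
    have hcvx := hconv.2 (Set.mem_univ x) (Set.mem_univ y)
      (by linarith [ht.2] : (0:ℝ) ≤ 1 - t) (le_of_lt ht.1) (by ring)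
    have hpt : (1 - t) • x + t • y = x + t • d := by
      rw [hd]
      module
    rw [hpt] at hcvx
    rw [div_le_iff₀ ht.1]
    simp only [smul_eq_mul] at hcvx
    nlinarith [hcvx]
  have h5 := le_of_tendsto h3 h4
  linarith

lemma aux_cocoercive (f : EuclideanSpace ℝ (Fin dl) → ℝ)
    (gf : EuclideanSpace ℝ (Fin dl) → EuclideanSpace ℝ (Fin dl))
    (hgrad : ∀ x y, f x + ⟪gf x, y - x⟫ ≤ f y) (hf : ∀ x, HasGradientAt f (gf x) x)
    (L : ℝ) (hL : 0 < L)
    (hsmooth : ∀ x y, Hd (gf x - gf y) ≤ L * H (x - y))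
    (a b : EuclideanSpace ℝ (Fin dl)) :
    1 / (2 * L) * Hd (gf a - gf b) ^ 2 ≤ f a - f b - ⟪gf b, a - b⟫ := by
  set g := gf a - gf b with hg
  have master : ∀ d : EuclideanSpace ℝ (Fin dl),
      -⟪g, d⟫ - L / 2 * H d ^ 2 ≤ f a - f b - ⟪gf b, a - b⟫ := by
    intro d
    have h1 := hgrad b (a + d)
    have h2 := aux_descent H Hd hH0 hH_smul hHnn hCS hHdnn hnear f gf hf L hL.le hsmooth a d
    have h3 : (a + d) - b = (a - b) + d := by abel
    rw [h3, inner_add_right] at h1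
    rw [hg, inner_sub_left]
    linarith
  rcases eq_or_lt_of_le (hHdnn g) with h0 | h0
  · have hrhs := master 0
    rw [← h0]
    simp only [hH0] at hrhs
    calc 1 / (2 * L) * (0:ℝ) ^ 2 = 0 := by ring
      _ ≤ f a - f b - ⟪gf b, a - b⟫ := by
        have := hgrad b a
        linarith
  · have key : ∀ ε : ℝ, 0 < ε →
        1 / (2 * L) * Hd g ^ 2 ≤ f a - f b - ⟪gf b, a - b⟫ + (Hd g / L) * ε := by
      intro ε hε
      obtain ⟨v, hv1, hv2⟩ := hnear g ε hε
      set t : ℝ := Hd g / L with ht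
      have ht0 : 0 < t := div_pos h0 hL
      have hmas := master (-(t • v))
      have hin : ⟪g, -(t • v)⟫ = -(t * ⟪g, v⟫) := by
        rw [inner_neg_right, real_inner_smul_right]
      have hH1 : H (-(t • v)) = t * H v := by
        have heq : -(t • v) = (-t) • v := by module
        rw [heq, hH_smul]
        rw [abs_neg, abs_of_pos ht0]
      have hHle : H (-(t • v)) ≤ t := by
        rw [hH1]
        calc t * H v ≤ t * 1 := mul_le_mul_of_nonneg_left hv1 ht0.le
          _ = t := mul_one t
      have hsq : H (-(t • v)) ^ 2 ≤ t ^ 2 := by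
        have h := hHnn (-(t • v))
        nlinarith
      have h5 : t * ⟪g, v⟫ - L / 2 * t ^ 2 ≤ f a - f b - ⟪gf b, a - b⟫ := by
        rw [hin] at hmas
        nlinarith [hmas, hsq]
      have h6 : t * (Hd g - ε) ≤ t * ⟪g, v⟫ := by
        apply mul_le_mul_of_nonneg_left _ ht0.le
        linarith
      have h7 : t * (Hd g - ε) - L / 2 * t ^ 2 = 1 / (2 * L) * Hd g ^ 2 - t * ε := by
        rw [ht]; field_simp; ring
      nlinarith [h5, h6]
    by_contra hcon
    push_neg at hcon
    set R := f a - f b - ⟪gf b, a - b⟫ with hR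
    set δ := 1 / (2 * L) * Hd g ^ 2 - R with hδ
    have hδ0 : 0 < δ := by rw [hδ]; linarith
    have hq : 0 < Hd g / L := div_pos h0 hL
    have hk := key (δ / (2 * (Hd g / L))) (by positivity)
    have hcl : (Hd g / L) * (δ / (2 * (Hd g / L))) = δ / 2 := by
      field_simp
    rw [hcl] at hk
    rw [hδ] at hk
    linarith

end


section
variable {dl : ℕ}

lemma aux_opt (w : EuclideanSpace ℝ (Fin dl) → ℝ)
    (gw : EuclideanSpace ℝ (Fin dl) → EuclideanSpace ℝ (Fin dl))
    (hw_diff : ∀ x, HasGradientAt w (gw x) x)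
    (Vb : EuclideanSpace ℝ (Fin dl) → EuclideanSpace ℝ (Fin dl) → ℝ)
    (hVb : ∀ x y, Vb x y = w y - w x - ⟪gw x, y - x⟫)
    (c : ℝ) (g0 zk p : EuclideanSpace ℝ (Fin dl))
    (hmin : ∀ z, c * Vb zk p + ⟪g0, p⟫ ≤ c * Vb zk z + ⟪g0, z⟫) :
    c • (gw p - gw zk) + g0 = 0 := by
  set F : EuclideanSpace ℝ (Fin dl) → ℝ := fun z => c * Vb zk z + ⟪g0, z⟫ with hF
  have hFeq : F = fun z => c * w z + ⟪g0 - c • gw zk, z⟫ + (c * ⟪gw zk, zk⟫ - c * w zk) := by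
    funext z
    simp only [hF]
    rw [hVb, inner_sub_left, real_inner_smul_left, inner_sub_right]
    ring
  have hFd : HasFDerivAt F
      (c • ((InnerProductSpace.toDual ℝ (EuclideanSpace ℝ (Fin dl))) (gw p)) +
        ((InnerProductSpace.toDual ℝ (EuclideanSpace ℝ (Fin dl))) (g0 - c • gw zk))) p := by
    rw [hFeq]
    exact (((hw_diff p).hasFDerivAt.const_mul c).add
      ((InnerProductSpace.toDual ℝ (EuclideanSpace ℝ (Fin dl)) (g0 - c • gw zk)).hasFDerivAt)).add_const _
  have hloc : IsLocalMin F p := Filter.Eventually.of_forall (fun z => hmin z)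
  have hz := hloc.hasFDerivAt_eq_zero hFd
  have h2 : (InnerProductSpace.toDual ℝ (EuclideanSpace ℝ (Fin dl))) (c • gw p + (g0 - c • gw zk)) = 0 := by
    rw [map_add, map_smul]
    exact hz
  have h3 : c • gw p + (g0 - c • gw zk) = 0 := by
    rwa [map_eq_zero_iff _ (InnerProductSpace.toDual ℝ (EuclideanSpace ℝ (Fin dl))).injective] at h2
  rw [smul_sub]
  rw [← h3]
  abel

lemma aux_phi_grad (m : ℕ)
    (φi : Fin m → EuclideanSpace ℝ (Fin dl) → ℝ)
    (gφi : Fin m → EuclideanSpace ℝ (Fin dl) → EuclideanSpace ℝ (Fin dl))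
    (hφi_diff : ∀ i x, HasGradientAt (φi i) (gφi i x) x)
    (φ : EuclideanSpace ℝ (Fin dl) → ℝ)
    (hφ : ∀ x, φ x = (1 / m : ℝ) * ∑ i, φi i x)
    (gφ : EuclideanSpace ℝ (Fin dl) → EuclideanSpace ℝ (Fin dl))
    (hgφ : ∀ x, gφ x = (m : ℝ)⁻¹ • ∑ i, gφi i x)
    (x : EuclideanSpace ℝ (Fin dl)) : HasGradientAt φ (gφ x) x := by
  have h1 : HasFDerivAt (fun x => (1 / m : ℝ) * ∑ i, φi i x)
      ((1 / m : ℝ) • ∑ i, (InnerProductSpace.toDual ℝ (EuclideanSpace ℝ (Fin dl))) (gφi i x)) x := by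
    exact (HasFDerivAt.fun_sum (fun i _ => (hφi_diff i x).hasFDerivAt)).const_mul _
  have h2 : φ = fun x => (1 / m : ℝ) * ∑ i, φi i x := funext hφ
  rw [hasGradientAt_iff_hasFDerivAt, h2]
  convert h1 using 1
  · rfl
  · rfl
  rw [hgφ, map_smul, map_sum]
  congr 1
  rw [one_div]
end

set_option maxHeartbeats 1000000 in
/-- Coupling step 2.  Under the one-inner-step setup of PDASMD, for every `u`:
`α ⟨∇φ(v_{k+1}), v_{k+1} − u⟩ ≤ α φ(v_{k+1}) + (α(1 − τ₁ − τ₂)/τ₁) φ(y_k)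
+ (α/τ₁)(τ₂ φ(ṽ^s) − E[φ(y_{k+1})]) + V_{z_k}(u) − E[V_{z_{k+1}}(u)]`,
where `E[g] = Σ_i p_i g(i)`. -/
theorem pdasmd_coupling_step2
    (dl m : ℕ) (hm : 0 < m)
    -- the norm ‖·‖_H and its dual norm ‖·‖_{H,*}
    (H : EuclideanSpace ℝ (Fin dl) → ℝ)
    (hH_def : ∀ x, H x = 0 ↔ x = 0)
    (hH_smul : ∀ (c : ℝ) (x : EuclideanSpace ℝ (Fin dl)), H (c • x) = |c| * H x)
    (hH_tri : ∀ x y, H (x + y) ≤ H x + H y)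
    (Hd : EuclideanSpace ℝ (Fin dl) → ℝ)
    (hHd : ∀ u, Hd u = sSup ((fun v => ⟪u, v⟫) '' {v | H v ≤ 1}))
    -- the finite-sum function φ = (1/m) Σ φᵢ, with gradients
    (φi : Fin m → EuclideanSpace ℝ (Fin dl) → ℝ)
    (gφi : Fin m → EuclideanSpace ℝ (Fin dl) → EuclideanSpace ℝ (Fin dl))
    (hφi_conv : ∀ i, ConvexOn ℝ Set.univ (φi i))
    (hφi_diff : ∀ i x, HasGradientAt (φi i) (gφi i x) x)
    (Li : Fin m → ℝ) (hLi : ∀ i, 0 < Li i)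
    (hφi_smooth : ∀ i x y, Hd (gφi i x - gφi i y) ≤ Li i * H (x - y))
    (Lbar : ℝ) (hLbar : Lbar = (∑ i, Li i) / m)
    (pr : Fin m → ℝ) (hpr : ∀ i, pr i = Li i / (m * Lbar))
    (φ : EuclideanSpace ℝ (Fin dl) → ℝ)
    (hφ : ∀ x, φ x = (1 / m : ℝ) * ∑ i, φi i x)
    (gφ : EuclideanSpace ℝ (Fin dl) → EuclideanSpace ℝ (Fin dl))
    (hgφ : ∀ x, gφ x = (m : ℝ)⁻¹ • ∑ i, gφi i x)
    -- the mirror map: differentiable, 1-strongly convex and γ-smooth w.r.t. ‖·‖_H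
    (γ : ℝ) (w : EuclideanSpace ℝ (Fin dl) → ℝ)
    (gw : EuclideanSpace ℝ (Fin dl) → EuclideanSpace ℝ (Fin dl))
    (hw_diff : ∀ x, HasGradientAt w (gw x) x)
    (hw_sc : ∀ x y, w x + ⟪gw x, y - x⟫ + (1 / 2) * H (y - x) ^ 2 ≤ w y)
    (hw_smooth : ∀ x y, Hd (gw x - gw y) ≤ γ * H (x - y))
    (Vb : EuclideanSpace ℝ (Fin dl) → EuclideanSpace ℝ (Fin dl) → ℝ)
    (hVb : ∀ x y, Vb x y = w y - w x - ⟪gw x, y - x⟫)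
    -- one inner step of PDASMD
    (s : ℕ) (τ1 τ2 α : ℝ)
    (hτ1 : τ1 = 2 / ((s : ℝ) + 4)) (hτ2 : τ2 = 1 / 2) (hα : α = 1 / (9 * τ1 * Lbar))
    (zk yk vts vk1 : EuclideanSpace ℝ (Fin dl))
    (hvk1 : vk1 = τ1 • zk + τ2 • vts + (1 - τ1 - τ2) • yk)
    (gt : Fin m → EuclideanSpace ℝ (Fin dl))
    (hgt : ∀ i, gt i = gφ vts + (1 / (m * pr i)) • (gφi i vk1 - gφi i vts))
    (z1 y1 : Fin m → EuclideanSpace ℝ (Fin dl))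
    (hz1 : ∀ i z, (1 / α) * Vb zk (z1 i) + ⟪gt i, z1 i⟫
      ≤ (1 / α) * Vb zk z + ⟪gt i, z⟫)
    (hy1 : ∀ i y, (9 * Lbar / 2) * H (y1 i - vk1) ^ 2 + ⟪gt i, y1 i⟫
      ≤ (9 * Lbar / 2) * H (y - vk1) ^ 2 + ⟪gt i, y⟫) :
    ∀ u : EuclideanSpace ℝ (Fin dl),
      α * ⟪gφ vk1, vk1 - u⟫
        ≤ α * φ vk1 + (α * (1 - τ1 - τ2) / τ1) * φ yk
          + (α / τ1) * (τ2 * φ vts - ∑ i, pr i * φ (y1 i))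
          + Vb zk u - ∑ i, pr i * Vb (z1 i) u := by
  intro u
  classical
  subst hτ2
  -- positivity facts
  have hm0 : ((m : ℝ)) ≠ 0 := Nat.cast_ne_zero.mpr hm.ne'
  have hmpos : (0 : ℝ) < m := Nat.cast_pos.mpr hm
  haveI : Nonempty (Fin m) := Fin.pos_iff_nonempty.mp hm
  have hLsum : 0 < ∑ i, Li i := Finset.sum_pos (fun i _ => hLi i) Finset.univ_nonempty
  have hLb : 0 < Lbar := by rw [hLbar]; exact div_pos hLsum hmpos
  have hLbne : Lbar ≠ 0 := hLb.ne'
  have hτ1p : 0 < τ1 := by rw [hτ1]; positivity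
  have hτ1ne : τ1 ≠ 0 := hτ1p.ne'
  have hτ1le : τ1 ≤ 1 / 2 := by
    rw [hτ1, div_le_div_iff₀ (by positivity) (by norm_num)]
    have hs : (0 : ℝ) ≤ (s : ℝ) := Nat.cast_nonneg s
    linarith
  have hαp : 0 < α := by rw [hα]; exact one_div_pos.mpr (by nlinarith)
  have hατ1 : 0 < α / τ1 := by positivity
  have hprp : ∀ i, 0 < pr i := fun i => by rw [hpr i]; exact div_pos (hLi i) (mul_pos hmpos hLb)
  have hprsum : ∑ i, pr i = 1 := by
    rw [Finset.sum_congr rfl (fun i _ => hpr i), ← Finset.sum_div, hLbar]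
    field_simp
  -- norm facts
  have hH0 : H 0 = 0 := aux_H_zero H hH_def
  have hHnn : ∀ x, 0 ≤ H x := aux_H_nonneg H hH_def hH_smul hH_tri
  have hHneg : ∀ x, H (-x) = H x := aux_H_neg H hH_smul
  obtain ⟨C, hC0, hC⟩ := aux_norm_le H hH_def hH_smul hH_tri
  have hCS : ∀ a b, ⟪a, b⟫ ≤ Hd a * H b :=
    aux_inner_le_Hd_H H Hd hHd C hC hC0 hH0 hH_smul hHnn
  have hHdnn : ∀ a, 0 ≤ Hd a := aux_Hd_nonneg H Hd hHd C hC hC0 hH0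
  have hnear : ∀ (a : EuclideanSpace ℝ (Fin dl)) (ε : ℝ), 0 < ε →
      ∃ v, H v ≤ 1 ∧ Hd a - ε < ⟪a, v⟫ :=
    fun a ε hε => aux_Hd_near_sup H Hd hHd C hC hC0 hH0 a hε
  have hHdadd : ∀ a b, Hd (a + b) ≤ Hd a + Hd b := aux_Hd_add H Hd hHd C hC hC0 hH0
  have hHdsmul : ∀ (c : ℝ), 0 ≤ c → ∀ a, Hd (c • a) ≤ c * Hd a :=
    fun c hc a => aux_Hd_smul_le H Hd hHd C hC hC0 hH0 hc a
  have hHdneg : ∀ a, Hd (-a) = Hd a := aux_Hd_neg H Hd hHd C hC hC0 hH0 hH_smul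
  have hHdzero : Hd (0 : EuclideanSpace ℝ (Fin dl)) = 0 := aux_Hd_zero H Hd hHd C hC hC0 hH0
  -- φ facts
  have hφdiff : ∀ x, HasGradientAt φ (gφ x) x := aux_phi_grad m φi gφi hφi_diff φ hφ gφ hgφ
  have hgi : ∀ i x y, φi i x + ⟪gφi i x, y - x⟫ ≤ φi i y :=
    fun i => aux_grad_convex H Hd hH0 hH_smul hHnn hCS hHdnn hnear (φi i) (gφi i)
      (hφi_conv i) (hφi_diff i)
  have hinnersplit : ∀ x d, (⟪gφ x, d⟫ : ℝ) = (m : ℝ)⁻¹ * ∑ i, ⟪gφi i x, d⟫ := by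
    intro x d
    rw [hgφ, real_inner_smul_left, sum_inner]
  have hφgrad : ∀ x y, φ x + ⟪gφ x, y - x⟫ ≤ φ y := by
    intro x y
    have hsum := Finset.sum_le_sum (fun i (_ : i ∈ Finset.univ) => hgi i x y)
    rw [Finset.sum_add_distrib] at hsum
    rw [hφ x, hφ y, hinnersplit, one_div]
    have hmul := mul_le_mul_of_nonneg_left hsum (inv_nonneg.mpr hmpos.le)
    rw [mul_add] at hmul
    linarith
  have hφsmooth : ∀ x y, Hd (gφ x - gφ y) ≤ Lbar * H (x - y) := by
    intro x y
    have h1 : gφ x - gφ y = (m : ℝ)⁻¹ • ∑ i, (gφi i x - gφi i y) := by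
      rw [hgφ, hgφ, ← smul_sub, Finset.sum_sub_distrib]
    rw [h1]
    calc Hd ((m : ℝ)⁻¹ • ∑ i, (gφi i x - gφi i y))
        ≤ (m : ℝ)⁻¹ * Hd (∑ i, (gφi i x - gφi i y)) := hHdsmul _ (by positivity) _
      _ ≤ (m : ℝ)⁻¹ * ∑ i, Hd (gφi i x - gφi i y) := by
          apply mul_le_mul_of_nonneg_left _ (by positivity)
          exact aux_sub_sum Hd hHdzero hHdadd _ _
      _ ≤ (m : ℝ)⁻¹ * ∑ i, Li i * H (x - y) := by
          apply mul_le_mul_of_nonneg_left _ (by positivity)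
          exact Finset.sum_le_sum (fun i _ => hφi_smooth i x y)
      _ = Lbar * H (x - y) := by
          rw [← Finset.sum_mul, hLbar]; ring
  -- co-coercivity
  have hco : ∀ i, 1 / (2 * Li i) * Hd (gφi i vts - gφi i vk1) ^ 2
      ≤ φi i vts - φi i vk1 - ⟪gφi i vk1, vts - vk1⟫ :=
    fun i => aux_cocoercive H Hd hH0 hH_smul hHnn hCS hHdnn hnear (φi i) (gφi i)
      (hgi i) (hφi_diff i) (Li i) (hLi i) (hφi_smooth i) vts vk1
  have hcoφ : 1 / (2 * Lbar) * Hd (gφ vts - gφ vk1) ^ 2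
      ≤ φ vts - φ vk1 - ⟪gφ vk1, vts - vk1⟫ :=
    aux_cocoercive H Hd hH0 hH_smul hHnn hCS hHdnn hnear φ gφ hφgrad hφdiff Lbar hLb
      hφsmooth vts vk1
  have hDavg : (m : ℝ)⁻¹ * ∑ i, (φi i vts - φi i vk1 - ⟪gφi i vk1, vts - vk1⟫)
      = φ vts - φ vk1 - ⟪gφ vk1, vts - vk1⟫ := by
    rw [hφ vts, hφ vk1, hinnersplit, Finset.sum_sub_distrib, Finset.sum_sub_distrib, one_div]
    ring
  -- variance bound
  have hvar : ∑ i, pr i * Hd (gt i - gφ vk1) ^ 2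
      ≤ 8 * Lbar * (φ vts - φ vk1 - ⟪gφ vk1, vts - vk1⟫) := by
    have hterm : ∀ i, pr i * Hd (gt i - gφ vk1) ^ 2
        ≤ 2 * pr i * Hd (gφ vts - gφ vk1) ^ 2
          + (4 * Lbar / m) * (φi i vts - φi i vk1 - ⟪gφi i vk1, vts - vk1⟫) := by
      intro i
      have hpne : pr i ≠ 0 := (hprp i).ne'
      have hcip : (0 : ℝ) < 1 / ((m : ℝ) * pr i) := one_div_pos.mpr (mul_pos hmpos (hprp i))
      have h1 : Hd (gt i - gφ vk1) ≤ Hd (gφ vts - gφ vk1)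
          + 1 / ((m : ℝ) * pr i) * Hd (gφi i vts - gφi i vk1) := by
        have hsplit : gt i - gφ vk1 = (gφ vts - gφ vk1)
            + (1 / ((m : ℝ) * pr i)) • (gφi i vk1 - gφi i vts) := by
          rw [hgt i]; abel
        rw [hsplit]
        calc Hd ((gφ vts - gφ vk1) + (1 / ((m : ℝ) * pr i)) • (gφi i vk1 - gφi i vts))
            ≤ Hd (gφ vts - gφ vk1) + Hd ((1 / ((m : ℝ) * pr i)) • (gφi i vk1 - gφi i vts)) :=
              hHdadd _ _
          _ ≤ Hd (gφ vts - gφ vk1) + 1 / ((m : ℝ) * pr i) * Hd (gφi i vk1 - gφi i vts) := by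
              have := hHdsmul (1 / ((m : ℝ) * pr i)) hcip.le (gφi i vk1 - gφi i vts)
              linarith
          _ = Hd (gφ vts - gφ vk1) + 1 / ((m : ℝ) * pr i) * Hd (gφi i vts - gφi i vk1) := by
              rw [show gφi i vk1 - gφi i vts = -(gφi i vts - gφi i vk1) from by abel, hHdneg]
      have hAnn : 0 ≤ Hd (gφ vts - gφ vk1) := hHdnn _
      have hBnn : 0 ≤ Hd (gφi i vts - gφi i vk1) := hHdnn _
      have hgnn : 0 ≤ Hd (gt i - gφ vk1) := hHdnn _
      have h2 : Hd (gt i - gφ vk1) ^ 2 ≤ (Hd (gφ vts - gφ vk1)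
          + 1 / ((m : ℝ) * pr i) * Hd (gφi i vts - gφi i vk1)) ^ 2 := by nlinarith
      have h3 : Hd (gφi i vts - gφi i vk1) ^ 2
          ≤ 2 * Li i * (φi i vts - φi i vk1 - ⟪gφi i vk1, vts - vk1⟫) := by
        have hc := hco i
        have hLine : Li i ≠ 0 := (hLi i).ne'
        have he : 2 * Li i * (1 / (2 * Li i) * Hd (gφi i vts - gφi i vk1) ^ 2)
            = Hd (gφi i vts - gφi i vk1) ^ 2 := by field_simp
        have hmul := mul_le_mul_of_nonneg_left hc (by linarith [hLi i] : (0 : ℝ) ≤ 2 * Li i)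
        rw [he] at hmul
        exact hmul
      have hfld : pr i * (1 / ((m : ℝ) * pr i)) ^ 2 * (2 * Li i) = 2 * Lbar / m := by
        have hLine : Li i ≠ 0 := (hLi i).ne'
        rw [hpr i]
        field_simp
      have step1 : pr i * Hd (gt i - gφ vk1) ^ 2
          ≤ pr i * (2 * Hd (gφ vts - gφ vk1) ^ 2
            + 2 * (1 / ((m : ℝ) * pr i)) ^ 2 * Hd (gφi i vts - gφi i vk1) ^ 2) := by
        apply mul_le_mul_of_nonneg_left _ (hprp i).le
        nlinarith [h2, sq_nonneg (Hd (gφ vts - gφ vk1)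
          - 1 / ((m : ℝ) * pr i) * Hd (gφi i vts - gφi i vk1))]
      have step2 : pr i * (2 * Hd (gφ vts - gφ vk1) ^ 2
            + 2 * (1 / ((m : ℝ) * pr i)) ^ 2 * Hd (gφi i vts - gφi i vk1) ^ 2)
          ≤ pr i * (2 * Hd (gφ vts - gφ vk1) ^ 2
            + 2 * (1 / ((m : ℝ) * pr i)) ^ 2
              * (2 * Li i * (φi i vts - φi i vk1 - ⟪gφi i vk1, vts - vk1⟫))) := by
        apply mul_le_mul_of_nonneg_left _ (hprp i).le
        have := mul_le_mul_of_nonneg_left h3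
          (by positivity : (0 : ℝ) ≤ 2 * (1 / ((m : ℝ) * pr i)) ^ 2)
        linarith
      have step3 : pr i * (2 * Hd (gφ vts - gφ vk1) ^ 2
            + 2 * (1 / ((m : ℝ) * pr i)) ^ 2
              * (2 * Li i * (φi i vts - φi i vk1 - ⟪gφi i vk1, vts - vk1⟫)))
          = 2 * pr i * Hd (gφ vts - gφ vk1) ^ 2
            + (4 * Lbar / m) * (φi i vts - φi i vk1 - ⟪gφi i vk1, vts - vk1⟫) := by
        linear_combination (2 * (φi i vts - φi i vk1 - ⟪gφi i vk1, vts - vk1⟫)) * hfld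
      linarith [step1, step2, step3]
    calc ∑ i, pr i * Hd (gt i - gφ vk1) ^ 2
        ≤ ∑ i, (2 * pr i * Hd (gφ vts - gφ vk1) ^ 2
          + (4 * Lbar / m) * (φi i vts - φi i vk1 - ⟪gφi i vk1, vts - vk1⟫)) :=
          Finset.sum_le_sum (fun i _ => hterm i)
      _ = 2 * Hd (gφ vts - gφ vk1) ^ 2
          + (4 * Lbar / m) * ∑ i, (φi i vts - φi i vk1 - ⟪gφi i vk1, vts - vk1⟫) := by
          rw [Finset.sum_add_distrib, ← Finset.mul_sum]
          congr 1
          calc ∑ i, 2 * pr i * Hd (gφ vts - gφ vk1) ^ 2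
              = (∑ i, pr i) * (2 * Hd (gφ vts - gφ vk1) ^ 2) := by
                rw [Finset.sum_mul]
                apply Finset.sum_congr rfl
                intros
                ring
            _ = 2 * Hd (gφ vts - gφ vk1) ^ 2 := by rw [hprsum, one_mul]
      _ ≤ 8 * Lbar * (φ vts - φ vk1 - ⟪gφ vk1, vts - vk1⟫) := by
          have hA2 : Hd (gφ vts - gφ vk1) ^ 2
              ≤ 2 * Lbar * (φ vts - φ vk1 - ⟪gφ vk1, vts - vk1⟫) := by
            have he : 2 * Lbar * (1 / (2 * Lbar) * Hd (gφ vts - gφ vk1) ^ 2)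
                = Hd (gφ vts - gφ vk1) ^ 2 := by field_simp
            have hmul := mul_le_mul_of_nonneg_left hcoφ (by linarith : (0 : ℝ) ≤ 2 * Lbar)
            rw [he] at hmul
            exact hmul
          have hsum : (4 * Lbar / m) * ∑ i, (φi i vts - φi i vk1 - ⟪gφi i vk1, vts - vk1⟫)
              = 4 * Lbar * (φ vts - φ vk1 - ⟪gφ vk1, vts - vk1⟫) := by
            rw [← hDavg]
            field_simp
          linarith
  -- per-index key inequality
  have key : ∀ i, α * ⟪gt i, zk - u⟫
      ≤ α / τ1 * (φ vk1 - φ (y1 i)) + α / (16 * Lbar * τ1) * Hd (gt i - gφ vk1) ^ 2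
        + Vb zk u - Vb (z1 i) u := by
    intro i
    -- optimality of z1 i
    have hopt := aux_opt w gw hw_diff Vb hVb (1 / α) (gt i) zk (z1 i) (hz1 i)
    have h2 : (gw (z1 i) - gw zk) + α • gt i = 0 := by
      have h2' := congrArg (fun v => α • v) hopt
      simp only [smul_add, smul_smul, smul_zero] at h2'
      rwa [mul_one_div, div_self hαp.ne', one_smul] at h2'
    have hgwz : gw zk - gw (z1 i) = α • gt i := by
      have h4 : gw zk - gw (z1 i) - α • gt i
          = -((gw (z1 i) - gw zk) + α • gt i) - α • gt i + α • gt i := by module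
      rw [← sub_eq_zero, h4, h2, neg_zero]
      abel
    -- three-point identity
    have h3pt : α * ⟪gt i, z1 i - u⟫ = Vb zk u - Vb zk (z1 i) - Vb (z1 i) u := by
      have e : Vb zk u - Vb zk (z1 i) - Vb (z1 i) u = ⟪gw zk - gw (z1 i), z1 i - u⟫ := by
        simp only [hVb, inner_sub_left, inner_sub_right]
        ring
      rw [e, hgwz, real_inner_smul_left]
    -- strong convexity
    have hsc : 1 / 2 * H (z1 i - zk) ^ 2 ≤ Vb zk (z1 i) := by
      have hw := hw_sc zk (z1 i)
      rw [hVb]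
      linarith
    -- minimality of y1 i at the point vk1 + τ1 • (z1 i - zk)
    have hy := hy1 i (vk1 + τ1 • (z1 i - zk))
    have e4 : vk1 + τ1 • (z1 i - zk) - vk1 = τ1 • (z1 i - zk) := by abel
    rw [e4] at hy
    have e5 : H (τ1 • (z1 i - zk)) ^ 2 = τ1 ^ 2 * H (z1 i - zk) ^ 2 := by
      rw [hH_smul, abs_of_pos hτ1p]
      ring
    have e6 : (⟪gt i, vk1 + τ1 • (z1 i - zk)⟫ : ℝ)
        = ⟪gt i, vk1⟫ + τ1 * ⟪gt i, z1 i - zk⟫ := by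
      rw [inner_add_right, real_inner_smul_right]
    rw [e5, e6] at hy
    have f3 : (⟪gt i, y1 i⟫ : ℝ) - ⟪gt i, vk1⟫
        ≤ 9 * Lbar / 2 * (τ1 ^ 2 * H (z1 i - zk) ^ 2) - 9 * Lbar / 2 * H (y1 i - vk1) ^ 2
          + τ1 * ⟪gt i, z1 i - zk⟫ := by linarith
    -- descent lemma for φ
    have f5 : φ (y1 i) ≤ φ vk1 + ⟪gφ vk1, y1 i - vk1⟫ + Lbar / 2 * H (y1 i - vk1) ^ 2 := by
      have hd := aux_descent H Hd hH0 hH_smul hHnn hCS hHdnn hnear φ gφ hφdiff Lbar hLb.le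
        hφsmooth vk1 (y1 i - vk1)
      rw [show vk1 + (y1 i - vk1) = y1 i from by abel] at hd
      exact hd
    -- Young's inequality
    have f6 : (⟪gt i - gφ vk1, vk1 - y1 i⟫ : ℝ)
        ≤ 1 / (16 * Lbar) * Hd (gt i - gφ vk1) ^ 2 + 4 * Lbar * H (y1 i - vk1) ^ 2 := by
      have h1 : (⟪gt i - gφ vk1, vk1 - y1 i⟫ : ℝ) ≤ Hd (gt i - gφ vk1) * H (vk1 - y1 i) :=
        hCS _ _
      have hsym : H (vk1 - y1 i) = H (y1 i - vk1) := by
        rw [show vk1 - y1 i = -(y1 i - vk1) from by abel, hHneg]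
      rw [hsym] at h1
      have h4 : 1 / (16 * Lbar) * Hd (gt i - gφ vk1) ^ 2 + 4 * Lbar * H (y1 i - vk1) ^ 2
          - Hd (gt i - gφ vk1) * H (y1 i - vk1)
          = (Hd (gt i - gφ vk1) - 8 * Lbar * H (y1 i - vk1)) ^ 2 / (16 * Lbar) := by
        field_simp
        ring
      have h5 : (0 : ℝ) ≤ (Hd (gt i - gφ vk1) - 8 * Lbar * H (y1 i - vk1)) ^ 2 / (16 * Lbar) := by
        positivity
      linarith
    have f7 : (⟪gt i, vk1 - y1 i⟫ : ℝ)
        = ⟪gφ vk1, vk1 - y1 i⟫ + ⟪gt i - gφ vk1, vk1 - y1 i⟫ := by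
      rw [inner_sub_left]
      ring
    have f7b : (⟪gφ vk1, vk1 - y1 i⟫ : ℝ) = -⟪gφ vk1, y1 i - vk1⟫ := by
      rw [show vk1 - y1 i = -(y1 i - vk1) from by abel, inner_neg_right]
    have f7c : (⟪gt i, vk1 - y1 i⟫ : ℝ) = ⟪gt i, vk1⟫ - ⟪gt i, y1 i⟫ := by
      rw [inner_sub_right]
    have f8 : (⟪gt i, vk1⟫ : ℝ) - ⟪gt i, y1 i⟫ - 9 * Lbar / 2 * H (y1 i - vk1) ^ 2
        ≤ φ vk1 - φ (y1 i) + 1 / (16 * Lbar) * Hd (gt i - gφ vk1) ^ 2 := by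
      linarith
    -- combine
    have f4 : (⟪gt i, zk - u⟫ : ℝ) = -⟪gt i, z1 i - zk⟫ + ⟪gt i, z1 i - u⟫ := by
      rw [show zk - u = -(z1 i - zk) + (z1 i - u) from by abel, inner_add_right,
        inner_neg_right]
    have g1 : α * ⟪gt i, zk - u⟫
        = -(α * ⟪gt i, z1 i - zk⟫) + (Vb zk u - Vb zk (z1 i) - Vb (z1 i) u) := by
      rw [f4]
      linear_combination h3pt
    have f3m := mul_le_mul_of_nonneg_left f3 hατ1.le
    have e3 : α / τ1 * (9 * Lbar / 2 * (τ1 ^ 2 * H (z1 i - zk) ^ 2)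
          - 9 * Lbar / 2 * H (y1 i - vk1) ^ 2 + τ1 * ⟪gt i, z1 i - zk⟫)
        = 1 / 2 * H (z1 i - zk) ^ 2 - α / τ1 * (9 * Lbar / 2) * H (y1 i - vk1) ^ 2
          + α * ⟪gt i, z1 i - zk⟫ := by
      rw [hα]
      field_simp
    have f8m := mul_le_mul_of_nonneg_left f8 hατ1.le
    have e8 : α / τ1 * (φ vk1 - φ (y1 i) + 1 / (16 * Lbar) * Hd (gt i - gφ vk1) ^ 2)
        = α / τ1 * (φ vk1 - φ (y1 i)) + α / (16 * Lbar * τ1) * Hd (gt i - gφ vk1) ^ 2 := by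
      ring
    have e8b : α / τ1 * (⟪gt i, vk1⟫ - ⟪gt i, y1 i⟫ - 9 * Lbar / 2 * H (y1 i - vk1) ^ 2)
        = -(α / τ1 * (⟪gt i, y1 i⟫ - ⟪gt i, vk1⟫))
          - α / τ1 * (9 * Lbar / 2) * H (y1 i - vk1) ^ 2 := by
      ring
    linarith [g1, hsc, f3m, e3, f8m, e8, e8b]
  -- sum the key inequality
  have hsumineq : ∑ i, pr i * (α * ⟪gt i, zk - u⟫)
      ≤ ∑ i, pr i * (α / τ1 * (φ vk1 - φ (y1 i))
        + α / (16 * Lbar * τ1) * Hd (gt i - gφ vk1) ^ 2 + Vb zk u - Vb (z1 i) u) :=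
    Finset.sum_le_sum (fun i _ => mul_le_mul_of_nonneg_left (key i) (hprp i).le)
  have hEgt : ∑ i, pr i • gt i = gφ vk1 := by
    have e1 : ∀ i : Fin m, pr i • gt i
        = pr i • gφ vts + ((m : ℝ)⁻¹) • (gφi i vk1 - gφi i vts) := by
      intro i
      have hpne : pr i ≠ 0 := (hprp i).ne'
      rw [hgt i, smul_add, smul_smul,
        show pr i * (1 / ((m : ℝ) * pr i)) = (m : ℝ)⁻¹ from by field_simp]
    rw [Finset.sum_congr rfl (fun i _ => e1 i), Finset.sum_add_distrib, ← Finset.sum_smul,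
      hprsum, one_smul, ← Finset.smul_sum, Finset.sum_sub_distrib, smul_sub, ← hgφ vk1,
      ← hgφ vts]
    abel
  have hLHSsum : ∑ i, pr i * (α * ⟪gt i, zk - u⟫) = α * ⟪gφ vk1, zk - u⟫ := by
    calc ∑ i, pr i * (α * ⟪gt i, zk - u⟫) = α * ∑ i, ⟪pr i • gt i, zk - u⟫ := by
          rw [Finset.mul_sum]
          apply Finset.sum_congr rfl
          intro i _
          rw [real_inner_smul_left]
          ring
      _ = α * ⟪∑ i, pr i • gt i, zk - u⟫ := by rw [sum_inner]
      _ = α * ⟪gφ vk1, zk - u⟫ := by rw [hEgt]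
  have hRHSsum : ∑ i, pr i * (α / τ1 * (φ vk1 - φ (y1 i))
        + α / (16 * Lbar * τ1) * Hd (gt i - gφ vk1) ^ 2 + Vb zk u - Vb (z1 i) u)
      = α / τ1 * φ vk1 - α / τ1 * (∑ i, pr i * φ (y1 i))
        + α / (16 * Lbar * τ1) * (∑ i, pr i * Hd (gt i - gφ vk1) ^ 2)
        + Vb zk u - ∑ i, pr i * Vb (z1 i) u := by
    have e1 : ∀ i : Fin m, pr i * (α / τ1 * (φ vk1 - φ (y1 i))
          + α / (16 * Lbar * τ1) * Hd (gt i - gφ vk1) ^ 2 + Vb zk u - Vb (z1 i) u)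
        = pr i * (α / τ1 * φ vk1 + Vb zk u) - α / τ1 * (pr i * φ (y1 i))
          + α / (16 * Lbar * τ1) * (pr i * Hd (gt i - gφ vk1) ^ 2)
          - pr i * Vb (z1 i) u := fun i => by ring
    rw [Finset.sum_congr rfl (fun i _ => e1 i)]
    rw [Finset.sum_sub_distrib, Finset.sum_add_distrib, Finset.sum_sub_distrib,
      ← Finset.sum_mul, hprsum, ← Finset.mul_sum, ← Finset.mul_sum]
    ring
  -- the "B" bound
  have hB : α * ⟪gφ vk1, zk - u⟫
      ≤ α / τ1 * φ vk1 - α / τ1 * (∑ i, pr i * φ (y1 i))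
        + α / (2 * τ1) * (φ vts - φ vk1 - ⟪gφ vk1, vts - vk1⟫)
        + Vb zk u - ∑ i, pr i * Vb (z1 i) u := by
    have h1 : α / (16 * Lbar * τ1) * (∑ i, pr i * Hd (gt i - gφ vk1) ^ 2)
        ≤ α / (16 * Lbar * τ1) * (8 * Lbar * (φ vts - φ vk1 - ⟪gφ vk1, vts - vk1⟫)) :=
      mul_le_mul_of_nonneg_left hvar (by positivity)
    have h2 : α / (16 * Lbar * τ1) * (8 * Lbar * (φ vts - φ vk1 - ⟪gφ vk1, vts - vk1⟫))
        = α / (2 * τ1) * (φ vts - φ vk1 - ⟪gφ vk1, vts - vk1⟫) := by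
      field_simp
      ring
    rw [← hLHSsum]
    rw [hRHSsum] at hsumineq
    linarith
  -- the "A" bound
  have hvecA : τ1 • (vk1 - zk) = (1 / 2 : ℝ) • (vts - vk1) + (1 - τ1 - 1 / 2) • (yk - vk1) := by
    rw [hvk1]
    module
  have hinnerA : τ1 * ⟪gφ vk1, vk1 - zk⟫
      = 1 / 2 * ⟪gφ vk1, vts - vk1⟫ + (1 - τ1 - 1 / 2) * ⟪gφ vk1, yk - vk1⟫ := by
    have h := congrArg (fun v => (⟪gφ vk1, v⟫ : ℝ)) hvecA
    simp only [inner_add_right, real_inner_smul_right] at h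
    exact h
  have hYk : (⟪gφ vk1, yk - vk1⟫ : ℝ) ≤ φ yk - φ vk1 := by
    have := hφgrad vk1 yk
    linarith
  have hTermA : α * ⟪gφ vk1, vk1 - zk⟫
      ≤ α / τ1 * (1 / 2) * ⟪gφ vk1, vts - vk1⟫
        + α / τ1 * (1 - τ1 - 1 / 2) * (φ yk - φ vk1) := by
    have hcoef : (0 : ℝ) ≤ α / τ1 * (1 - τ1 - 1 / 2) := by
      apply mul_nonneg hατ1.le
      linarith
    have h1 : α * ⟪gφ vk1, vk1 - zk⟫ = α / τ1 * (τ1 * ⟪gφ vk1, vk1 - zk⟫) := by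
      field_simp
    rw [h1, hinnerA]
    have h2 := mul_le_mul_of_nonneg_left hYk hcoef
    have h3 : α / τ1 * (1 / 2 * ⟪gφ vk1, vts - vk1⟫ + (1 - τ1 - 1 / 2) * ⟪gφ vk1, yk - vk1⟫)
        = α / τ1 * (1 / 2) * ⟪gφ vk1, vts - vk1⟫
          + α / τ1 * (1 - τ1 - 1 / 2) * ⟪gφ vk1, yk - vk1⟫ := by ring
    rw [h3]
    linarith
  -- final combination
  have hmul : α * ⟪gφ vk1, vk1 - u⟫
      = α * ⟪gφ vk1, vk1 - zk⟫ + α * ⟪gφ vk1, zk - u⟫ := by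
    rw [show vk1 - u = (vk1 - zk) + (zk - u) from by abel, inner_add_right]
    ring
  have id1 : α / (2 * τ1) * (φ vts - φ vk1 - ⟪gφ vk1, vts - vk1⟫)
      = α / (2 * τ1) * φ vts - α / (2 * τ1) * φ vk1
        - α / (2 * τ1) * ⟪gφ vk1, vts - vk1⟫ := by ring
  have id2 : α / τ1 * (1 / 2) * ⟪gφ vk1, vts - vk1⟫
      - α / (2 * τ1) * ⟪gφ vk1, vts - vk1⟫ = 0 := by ring
  have id3 : α / τ1 * φ vk1 - α / (2 * τ1) * φ vk1 - α / τ1 * (1 - τ1 - 1 / 2) * φ vk1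
      = α * φ vk1 := by
    field_simp
    ring
  have id5 : α / τ1 * (1 - τ1 - 1 / 2) * φ yk = α * (1 - τ1 - 1 / 2) / τ1 * φ yk := by ring
  have id6 : α / τ1 * (1 / 2 * φ vts - ∑ i, pr i * φ (y1 i))
      = α / (2 * τ1) * φ vts - α / τ1 * (∑ i, pr i * φ (y1 i)) := by ring
  linarith [hTermA, hB, hmul, id1, id2, id3, id5, id6]
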